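/- For every 3SAT formula φ on n boolean variables (n even, n ≥ 4) and every truth assignment A of the variables, the sequence V₁, V₂, …, V_n, L₁, L₂, …, L_n, V_{n+1}, …, V_{2n} — where L_i = X_i if A sets x_i true and L_i = X̄_i otherwise — is a shortest path of length 3n − 1 from V₁ to V_{2n} in G(φ). In particular G(φ) has at least 2ⁿ distinct diametral paths. -/

import Mathlib

open SimpleGraph

/-- Vertices of the graph `G(φ)` associated with a 3SAT formula `φ` with `m` clauses over `n`
boolean variables (`n` even):
* `lit i b` is the literal vertex `X_{i+1}` (if `b = true`) or `X̄_{i+1}` (if `b = false`);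
* `chain k` is the vertex `V_{k+1}` of the two pending chains `V₁ — ⋯ — V_n` and
  `V_{n+1} — ⋯ — V_{2n}`;
* `clause j` is the vertex of the clause `C_{j+1}`;
* `inner j t s` is the `(s+1)`-st internal vertex of the path of length `n/2 + 1` (with `n/2`
  internal vertices) joining the clause vertex `C_{j+1}` to the vertex of its `(t+1)`-st
  literal. -/
inductive Vert (n m : ℕ) : Type
  | lit : Fin n → Bool → Vert n m
  | chain : Fin (2 * n) → Vert n m
  | clause : Fin m → Vert n m
  | inner : Fin m → Fin 3 → Fin (n / 2) → Vert n m
  deriving DecidableEq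

/-- The base (asymmetric) adjacency relation of `G(φ)`, where the 3SAT formula `φ` assigns to
each clause index `j` and each slot `t ∈ {0,1,2}` a literal `φ j t = (i, b)` (variable index
`i`, polarity `b`):
* `X_i` and `X̄_i` are adjacent, and every vertex of `{X_i, X̄_i}` is adjacent to every vertex
  of `{X_{i+1}, X̄_{i+1}}`;
* `V₁ — ⋯ — V_n` and `V_{n+1} — ⋯ — V_{2n}` are paths, `V_n` is moreover adjacent to both
  `X₁, X̄₁` and `V_{n+1}` to both `X_n, X̄_n`;
* each clause vertex `C_j` is joined to the vertex of each of its literals by a path of length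
  `n/2 + 1` whose `n/2` internal vertices are the `inner j t s`. -/
def satRel (n m : ℕ) (φ : Fin m → Fin 3 → Fin n × Bool) : Vert n m → Vert n m → Prop
  | .lit i b, .lit i' b' => (i = i' ∧ b ≠ b') ∨ (i : ℕ) + 1 = (i' : ℕ)
  | .chain k, .chain k' => (k : ℕ) + 1 = (k' : ℕ) ∧ (k' : ℕ) ≠ n
  | .chain k, .lit i _ => ((k : ℕ) = n - 1 ∧ (i : ℕ) = 0) ∨ ((k : ℕ) = n ∧ (i : ℕ) = n - 1)
  | .clause j, .inner j' _ s => j = j' ∧ (s : ℕ) = 0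
  | .inner j t s, .inner j' t' s' => j = j' ∧ t = t' ∧ (s : ℕ) + 1 = (s' : ℕ)
  | .inner j t s, .lit i b => (s : ℕ) = n / 2 - 1 ∧ φ j t = (i, b)
  | _, _ => False

/-- The graph `G(φ)` associated with a 3SAT formula `φ`. -/
def Gphi (n m : ℕ) (φ : Fin m → Fin 3 → Fin n × Bool) : SimpleGraph (Vert n m) :=
  SimpleGraph.fromRel (satRel n m φ)

/-- The support of the path `V₁, …, V_n, L₁, …, L_n, V_{n+1}, …, V_{2n}` determined by a truth
assignment `A`, where `L_i = X_i` if `A` sets `x_i` true and `L_i = X̄_i` otherwise. -/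
def assignSupport (n m : ℕ) (A : Fin n → Bool) : List (Vert n m) :=
  ((List.finRange n).map fun i => Vert.chain (Fin.castLE (by omega) i)) ++
  ((List.finRange n).map fun i => Vert.lit i (A i)) ++
  ((List.finRange n).map fun (i : Fin n) => Vert.chain ⟨n + (i : ℕ), by have := i.isLt; omega⟩)

namespace GP

lemma exists_walk_seq {V : Type*} (G : SimpleGraph V) (g : ℕ → V) :
    ∀ d a : ℕ, (∀ k, k < d → G.Adj (g (a + k)) (g (a + k + 1))) →
      ∃ w : G.Walk (g a) (g (a + d)),
        w.length = d ∧ w.support = (List.range (d + 1)).map fun k => g (a + k) := by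
  intro d
  induction d with
  | zero => exact fun a _ => ⟨.nil, by simp [List.range_succ]⟩
  | succ d ih =>
    intro a h
    obtain ⟨w, hl, hs⟩ := ih a fun k hk => h k (by omega)
    refine ⟨w.concat (h d (by omega)), by simp [hl], ?_⟩
    rw [SimpleGraph.Walk.support_concat, hs]
    rw [show d + 1 + 1 = (d+1) + 1 from rfl, List.range_succ (n := d+1)]
    simp

lemma exists_walk_seq0 {V : Type*} (G : SimpleGraph V) (g : ℕ → V) (d : ℕ)
    (h : ∀ k, k < d → G.Adj (g k) (g (k + 1))) :
    ∃ w : G.Walk (g 0) (g d), w.length = d ∧ w.support = (List.range (d + 1)).map g := by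
  obtain ⟨w, hl, hs⟩ := exists_walk_seq G g d 0 (by simpa using h)
  exact ⟨w.copy rfl (by rw [Nat.zero_add]), by simpa using hl, by simpa using hs⟩

variable {n m : ℕ} {φ : Fin m → Fin 3 → Fin n × Bool}

lemma adj_of_satRel {u v : Vert n m} (hne : u ≠ v) (h : satRel n m φ u v) :
    (Gphi n m φ).Adj u v :=
  (SimpleGraph.fromRel_adj _ _ _).mpr ⟨hne, Or.inl h⟩

lemma adj_chain_chain {k k' : Fin (2*n)} (h : (k:ℕ)+1 = (k':ℕ)) (h2 : (k':ℕ) ≠ n) :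
    (Gphi n m φ).Adj (.chain k) (.chain k') :=
  adj_of_satRel (by intro he; cases he; omega) ⟨h, h2⟩

lemma adj_chain_lit {k : Fin (2*n)} {i : Fin n} {b : Bool}
    (h : ((k:ℕ) = n - 1 ∧ (i:ℕ) = 0) ∨ ((k:ℕ) = n ∧ (i:ℕ) = n-1)) :
    (Gphi n m φ).Adj (.chain k) (.lit i b) :=
  adj_of_satRel (by simp) h

lemma adj_lit_succ {i i' : Fin n} {b b' : Bool} (h : (i:ℕ)+1 = (i':ℕ)) :
    (Gphi n m φ).Adj (.lit i b) (.lit i' b') :=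
  adj_of_satRel (by intro he; cases he; omega) (Or.inr h)

lemma adj_lit_flip {i : Fin n} {b b' : Bool} (h : b ≠ b') :
    (Gphi n m φ).Adj (.lit i b) (.lit i b') :=
  adj_of_satRel (by intro he; cases he; exact h rfl) (Or.inl ⟨rfl, h⟩)

lemma adj_clause_inner {j : Fin m} {t : Fin 3} {s : Fin (n/2)} (hs : (s:ℕ) = 0) :
    (Gphi n m φ).Adj (.clause j) (.inner j t s) :=
  adj_of_satRel (by simp) ⟨rfl, hs⟩

lemma adj_inner_inner {j : Fin m} {t : Fin 3} {s s' : Fin (n/2)} (h : (s:ℕ)+1 = (s':ℕ)) :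
    (Gphi n m φ).Adj (.inner j t s) (.inner j t s') :=
  adj_of_satRel (by intro he; cases he; omega) ⟨rfl, rfl, h⟩

lemma adj_inner_lit {j : Fin m} {t : Fin 3} {s : Fin (n/2)} {i : Fin n} {b : Bool}
    (hs : (s:ℕ) = n/2 - 1) (hp : φ j t = (i, b)) :
    (Gphi n m φ).Adj (.inner j t s) (.lit i b) :=
  adj_of_satRel (by simp) ⟨hs, hp⟩

end GP

namespace GP

def rho (n m : ℕ) (φ : Fin m → Fin 3 → Fin n × Bool) : Vert n m → ℤ
  | .lit i _ => (n : ℤ) + (i : ℕ)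
  | .chain k => if (k:ℕ) < n then ((k:ℕ) : ℤ) else ((k:ℕ) : ℤ) + n
  | .clause _ => (n : ℤ) + ((n/2 : ℕ) : ℤ)
  | .inner j t s =>
      if (n/2 : ℕ) ≤ (((φ j t).1 : ℕ)) then
        min ((n:ℤ) + ((n/2:ℕ):ℤ) + (((s:ℕ):ℤ)+1)) ((n:ℤ) + (((φ j t).1 : ℕ) : ℤ))
      else
        max ((n:ℤ) + ((n/2:ℕ):ℤ) - (((s:ℕ):ℤ)+1)) ((n:ℤ) + (((φ j t).1 : ℕ) : ℤ))

variable {n m : ℕ} {φ : Fin m → Fin 3 → Fin n × Bool}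

lemma rho_lip (hn : Even n) (h4 : 4 ≤ n) {u v : Vert n m} (h : satRel n m φ u v) :
    rho n m φ u ≤ rho n m φ v + 1 ∧ rho n m φ v ≤ rho n m φ u + 1 := by
  obtain ⟨q, hq⟩ := hn
  have hq2 : n / 2 = q := by omega
  cases u with
  | lit i b =>
    cases v with
    | lit i' b' =>
      rcases h with ⟨rfl, _⟩ | hsucc <;> simp only [rho] <;> omega
    | chain k => exact h.elim
    | clause j => exact h.elim
    | inner j t s => exact h.elim
  | chain k =>
    cases v with
    | lit i b =>
      have hk := k.isLt
      have hi := i.isLt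
      rcases h with ⟨h1, h2⟩ | ⟨h1, h2⟩ <;> simp only [rho] <;> split_ifs <;> omega
    | chain k' =>
      have hk := k.isLt
      have hk' := k'.isLt
      obtain ⟨h1, h2⟩ := h
      simp only [rho] <;> split_ifs <;> omega
    | clause j => exact h.elim
    | inner j t s => exact h.elim
  | clause j =>
    cases v with
    | lit i b => exact h.elim
    | chain k => exact h.elim
    | clause j' => exact h.elim
    | inner j' t s =>
      obtain ⟨rfl, hs⟩ := h
      have hi := ((φ j t).1).isLt
      have hsl := s.isLt
      simp only [rho, min_def, max_def] <;> split_ifs <;> omega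
  | inner j t s =>
    cases v with
    | lit i b =>
      obtain ⟨hs, hp⟩ := h
      have hi := i.isLt
      have hsl := s.isLt
      simp only [rho, hp, min_def, max_def] <;> split_ifs <;> omega
    | chain k => exact h.elim
    | clause j' => exact h.elim
    | inner j' t' s' =>
      obtain ⟨rfl, rfl, hss⟩ := h
      have hi := ((φ j t).1).isLt
      have hsl := s.isLt
      have hsl' := s'.isLt
      simp only [rho, min_def, max_def] <;> split_ifs <;> omega

lemma rho_walk (hn : Even n) (h4 : 4 ≤ n) {u v : Vert n m} (w : (Gphi n m φ).Walk u v) :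
    rho n m φ u ≤ rho n m φ v + w.length ∧ rho n m φ v ≤ rho n m φ u + w.length := by
  induction w with
  | nil => simp
  | @cons u x v hadj p ih =>
    have hl : (SimpleGraph.fromRel (satRel n m φ)).Adj u x := hadj
    rw [SimpleGraph.fromRel_adj] at hl
    have hb : rho n m φ u ≤ rho n m φ x + 1 ∧ rho n m φ x ≤ rho n m φ u + 1 := by
      rcases hl.2 with h | h
      · exact rho_lip hn h4 h
      · exact (rho_lip hn h4 h).symm
    simp only [SimpleGraph.Walk.length_cons]
    push_cast
    omega

end GP

namespace GP

def gA (n m : ℕ) (h4 : 4 ≤ n) (A : Fin n → Bool) (k : ℕ) : Vert n m :=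
  if h : k < n then .chain ⟨k, by omega⟩
  else if h2 : k < 2*n then .lit ⟨k - n, by omega⟩ (A ⟨k - n, by omega⟩)
  else if h3 : k < 3*n then .chain ⟨k - n, by omega⟩
  else .chain ⟨0, by omega⟩

variable {n m : ℕ} {φ : Fin m → Fin 3 → Fin n × Bool} {h4 : 4 ≤ n} {A : Fin n → Bool}

lemma gA_lo {k : ℕ} (hk : k < n) : gA n m h4 A k = .chain ⟨k, by omega⟩ := dif_pos hk

lemma gA_mid {k : ℕ} (h1 : n ≤ k) (h2 : k < 2*n) :
    gA n m h4 A k = .lit ⟨k - n, by omega⟩ (A ⟨k - n, by omega⟩) := by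
  rw [gA, dif_neg (by omega), dif_pos h2]

lemma gA_hi {k : ℕ} (h1 : 2*n ≤ k) (h2 : k < 3*n) :
    gA n m h4 A k = .chain ⟨k - n, by omega⟩ := by
  rw [gA, dif_neg (by omega), dif_neg (by omega), dif_pos h2]

lemma gA_adj : ∀ k, k < 3*n - 1 →
    (Gphi n m φ).Adj (gA n m h4 A k) (gA n m h4 A (k+1)) := by
  intro k hk
  rcases lt_trichotomy (k+1) n with h | h | h
  · rw [gA_lo (by omega), gA_lo h]
    exact adj_chain_chain (show k + 1 = k + 1 from rfl) (show k + 1 ≠ n by omega)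
  · rw [gA_lo (by omega), gA_mid (by omega) (by omega)]
    exact adj_chain_lit (Or.inl ⟨show k = n - 1 by omega, show k + 1 - n = 0 by omega⟩)
  · rcases lt_trichotomy (k+1) (2*n) with h2 | h2 | h2
    · rw [gA_mid (by omega) (by omega), gA_mid (by omega) h2]
      exact adj_lit_succ (show (k - n) + 1 = k + 1 - n by omega)
    · rw [gA_mid (by omega) (by omega), gA_hi (by omega) (by omega)]
      exact (adj_chain_lit (Or.inr
        ⟨show k + 1 - n = n by omega, show k - n = n - 1 by omega⟩)).symm
    · rw [gA_hi (by omega) (by omega), gA_hi (by omega) (by omega)]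
      exact adj_chain_chain (show (k - n) + 1 = k + 1 - n by omega)
        (show k + 1 - n ≠ n by omega)

lemma rho_gA {k : ℕ} (hk : k < 3*n) : rho n m φ (gA n m h4 A k) = k := by
  rcases lt_trichotomy k n with h | h | h
  · rw [gA_lo h]; simp only [rho]; rw [if_pos (by simpa using h)]
  · rw [gA_mid (by omega) (by omega)]; simp only [rho]; push_cast; omega
  · by_cases h2 : k < 2*n
    · rw [gA_mid (by omega) h2]; simp only [rho]; push_cast; omega
    · rw [gA_hi (by omega) hk]; simp only [rho]
      rw [if_neg (by simp; omega)]; push_cast; omega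

lemma finRange_map_eq_range_map {α : Type*} {f : Fin n → α} {g : ℕ → α}
    (h : ∀ i : Fin n, f i = g (i : ℕ)) :
    (List.finRange n).map f = (List.range n).map g := by
  apply List.ext_getElem
  · simp
  · intro k h1 h2
    simp [h]

lemma range_map_gA : (List.range (3*n)).map (gA n m h4 A) = assignSupport n m A := by
  have e0 : (List.range (3*n)).map (gA n m h4 A) =
      (List.range n).map (gA n m h4 A) ++
      ((List.range n).map (fun k => gA n m h4 A (n + k)) ++
       (List.range n).map (fun k => gA n m h4 A (n + (n + k)))) := by
    rw [show 3*n = n + (n + n) by ring, List.range_add, List.range_add, List.map_append,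
      List.map_append, List.map_append, List.map_map, List.map_map, List.map_map]
    rfl
  rw [e0, assignSupport, List.append_assoc]
  congr 1
  · refine (finRange_map_eq_range_map fun i => ?_).symm
    rw [gA_lo i.isLt]
    exact congrArg _ (Fin.ext rfl)
  congr 1
  · refine (finRange_map_eq_range_map fun i => ?_).symm
    rw [gA_mid (by omega) (by have := i.isLt; omega)]
    have : (⟨n + (i:ℕ) - n, by have := i.isLt; omega⟩ : Fin n) = i := Fin.ext (by simp)
    rw [this]
  · refine (finRange_map_eq_range_map fun i => ?_).symm
    rw [gA_hi (by omega) (by have := i.isLt; omega)]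
    exact congrArg _ (Fin.ext (by simp))

end GP

namespace GP

variable {n m : ℕ} {φ : Fin m → Fin 3 → Fin n × Bool}

lemma walk_lit_asc (i i' : Fin n) (hlt : (i:ℕ) < (i':ℕ)) (b b' : Bool) :
    ∃ w : (Gphi n m φ).Walk (.lit i b) (.lit i' b'), w.length = (i':ℕ) - (i:ℕ) := by
  have hi' := i'.isLt
  have hadj : ∀ k, k < (i':ℕ) - (i:ℕ) →
      (Gphi n m φ).Adj
        (if h : (i:ℕ) + k < (i':ℕ) then (Vert.lit ⟨(i:ℕ) + k, by omega⟩ b : Vert n m)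
          else .lit i' b')
        (if h : (i:ℕ) + (k+1) < (i':ℕ) then (Vert.lit ⟨(i:ℕ) + (k+1), by omega⟩ b : Vert n m)
          else .lit i' b') := by
    intro k hk
    rw [dif_pos (show (i:ℕ) + k < (i':ℕ) by omega)]
    by_cases h2 : (i:ℕ) + (k+1) < (i':ℕ)
    · rw [dif_pos h2]
      exact adj_lit_succ (show (i:ℕ) + k + 1 = (i:ℕ) + (k+1) by omega)
    · rw [dif_neg h2]
      exact adj_lit_succ (show (i:ℕ) + k + 1 = (i':ℕ) by omega)
  obtain ⟨w, hl, -⟩ := exists_walk_seq0 (Gphi n m φ)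
    (fun k => if h : (i:ℕ) + k < (i':ℕ) then .lit ⟨(i:ℕ) + k, by omega⟩ b else .lit i' b')
    ((i':ℕ) - (i:ℕ)) hadj
  · have e1 : (if h : (i:ℕ) + 0 < (i':ℕ) then (Vert.lit ⟨(i:ℕ) + 0, by omega⟩ b : Vert n m)
        else .lit i' b') = .lit i b :=
      dif_pos (by omega)
    have e2 : (if h : (i:ℕ) + ((i':ℕ) - (i:ℕ)) < (i':ℕ)
        then (Vert.lit ⟨(i:ℕ) + ((i':ℕ) - (i:ℕ)), by omega⟩ b : Vert n m)
        else .lit i' b') = .lit i' b' := dif_neg (by omega)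
    exact ⟨w.copy e1 e2, by rw [SimpleGraph.Walk.length_copy, hl]⟩

lemma walk_lit_lit (h4 : 4 ≤ n) (i i' : Fin n) (b b' : Bool) :
    ∃ w : (Gphi n m φ).Walk (.lit i b) (.lit i' b'), w.length ≤ n - 1 := by
  rcases lt_trichotomy (i:ℕ) (i':ℕ) with h | h | h
  · obtain ⟨w, hl⟩ := walk_lit_asc i i' h b b'
    exact ⟨w, by have := i'.isLt; omega⟩
  · have hii : i = i' := Fin.ext h
    subst hii
    by_cases hb : b = b'
    · subst hb; exact ⟨.nil, by simp⟩
    · refine ⟨(adj_lit_flip hb).toWalk, ?_⟩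
      have : ((adj_lit_flip (n := n) (m := m) (φ := φ) (i := i) hb).toWalk).length = 1 := rfl
      omega
  · obtain ⟨w, hl⟩ := walk_lit_asc i' i h b' b
    refine ⟨w.reverse, ?_⟩
    rw [SimpleGraph.Walk.length_reverse, hl]
    have := i.isLt
    omega

lemma walk_to_lit (h4 : 4 ≤ n) (u : Vert n m) :
    ∃ (i : Fin n) (b : Bool) (w : (Gphi n m φ).Walk u (.lit i b)), w.length ≤ n := by
  cases u with
  | lit i b => exact ⟨i, b, .nil, by simp⟩
  | chain k =>
    have hk2 := k.isLt
    by_cases hk : (k:ℕ) < n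
    · have hadj : ∀ j, j < n - (k:ℕ) →
          (Gphi n m φ).Adj
            (if h : (k:ℕ) + j < n then (Vert.chain ⟨(k:ℕ) + j, by omega⟩ : Vert n m)
              else .lit ⟨0, by omega⟩ true)
            (if h : (k:ℕ) + (j+1) < n then (Vert.chain ⟨(k:ℕ) + (j+1), by omega⟩ : Vert n m)
              else .lit ⟨0, by omega⟩ true) := by
        intro j hj
        rw [dif_pos (show (k:ℕ) + j < n by omega)]
        by_cases h2 : (k:ℕ) + (j+1) < n
        · rw [dif_pos h2]
          exact adj_chain_chain (show (k:ℕ) + j + 1 = (k:ℕ) + (j+1) by omega) (show (k:ℕ) + (j+1) ≠ n by omega)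
        · rw [dif_neg h2]
          exact adj_chain_lit (Or.inl ⟨show (k:ℕ) + j = n - 1 by omega, rfl⟩)
      obtain ⟨w, hl, -⟩ := exists_walk_seq0 (Gphi n m φ)
        (fun j => if h : (k:ℕ) + j < n then .chain ⟨(k:ℕ) + j, by omega⟩
          else .lit ⟨0, by omega⟩ true)
        (n - (k:ℕ)) hadj
      · have e1 : (if h : (k:ℕ) + 0 < n then (Vert.chain ⟨(k:ℕ) + 0, by omega⟩ : Vert n m)
            else .lit ⟨0, by omega⟩ true) = .chain k :=
          dif_pos (by omega)
        have e2 : (if h : (k:ℕ) + (n - (k:ℕ)) < n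
            then (Vert.chain ⟨(k:ℕ) + (n - (k:ℕ)), by omega⟩ : Vert n m)
            else .lit ⟨0, by omega⟩ true) = .lit ⟨0, by omega⟩ true := dif_neg (by omega)
        refine ⟨⟨0, by omega⟩, true, w.copy e1 e2, ?_⟩
        rw [SimpleGraph.Walk.length_copy, hl]
        omega
    · have hadj : ∀ j, j < (k:ℕ) - n + 1 →
          (Gphi n m φ).Adj
            (if h : j ≤ (k:ℕ) - n then (Vert.chain ⟨(k:ℕ) - j, by omega⟩ : Vert n m)
              else .lit ⟨n - 1, by omega⟩ true)
            (if h : j + 1 ≤ (k:ℕ) - n then (Vert.chain ⟨(k:ℕ) - (j+1), by omega⟩ : Vert n m)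
              else .lit ⟨n - 1, by omega⟩ true) := by
        intro j hj
        rw [dif_pos (show j ≤ (k:ℕ) - n by omega)]
        by_cases h2 : j + 1 ≤ (k:ℕ) - n
        · rw [dif_pos h2]
          exact (adj_chain_chain (show (k:ℕ) - (j+1) + 1 = (k:ℕ) - j by omega)
            (show (k:ℕ) - j ≠ n by omega)).symm
        · rw [dif_neg h2]
          exact adj_chain_lit (Or.inr ⟨show (k:ℕ) - j = n by omega, rfl⟩)
      obtain ⟨w, hl, -⟩ := exists_walk_seq0 (Gphi n m φ)
        (fun j => if h : j ≤ (k:ℕ) - n then .chain ⟨(k:ℕ) - j, by omega⟩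
          else .lit ⟨n - 1, by omega⟩ true)
        ((k:ℕ) - n + 1) hadj
      · have e1 : (if h : 0 ≤ (k:ℕ) - n then (Vert.chain ⟨(k:ℕ) - 0, by omega⟩ : Vert n m)
            else .lit ⟨n - 1, by omega⟩ true) = .chain k :=
          dif_pos (by omega)
        have e2 : (if h : (k:ℕ) - n + 1 ≤ (k:ℕ) - n
            then (Vert.chain ⟨(k:ℕ) - ((k:ℕ) - n + 1), by omega⟩ : Vert n m)
            else .lit ⟨n - 1, by omega⟩ true) = .lit ⟨n - 1, by omega⟩ true := dif_neg (by omega)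
        refine ⟨⟨n - 1, by omega⟩, true, w.copy e1 e2, ?_⟩
        rw [SimpleGraph.Walk.length_copy, hl]
        omega
  | clause j =>
    rcases hp : φ j 0 with ⟨i, b⟩
    have hadj : ∀ r, r < n/2 + 1 →
        (Gphi n m φ).Adj
          (if h0 : r = 0 then (Vert.clause j : Vert n m)
            else if h : r - 1 < n/2 then .inner j 0 ⟨r - 1, h⟩ else .lit i b)
          (if h0 : r + 1 = 0 then (Vert.clause j : Vert n m)
            else if h : r + 1 - 1 < n/2 then .inner j 0 ⟨r + 1 - 1, h⟩ else .lit i b) := by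
      intro r hr
      by_cases h0 : r = 0
      · subst h0
        rw [dif_pos rfl, dif_neg (show (0:ℕ) + 1 ≠ 0 by omega),
          dif_pos (show 0 + 1 - 1 < n/2 by omega)]
        exact adj_clause_inner rfl
      · rw [dif_neg h0, dif_pos (show r - 1 < n/2 by omega), dif_neg (show r + 1 ≠ 0 by omega)]
        by_cases h2 : r + 1 - 1 < n/2
        · rw [dif_pos h2]
          exact adj_inner_inner (show r - 1 + 1 = r + 1 - 1 by omega)
        · rw [dif_neg h2]
          exact adj_inner_lit (show r - 1 = n/2 - 1 by omega) hp
    obtain ⟨w, hl, -⟩ := exists_walk_seq0 (Gphi n m φ)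
      (fun r => if h0 : r = 0 then .clause j
        else if h : r - 1 < n/2 then .inner j 0 ⟨r - 1, h⟩ else .lit i b)
      (n/2 + 1) hadj
    · have e2 : (if h0 : n/2 + 1 = 0 then (Vert.clause j : Vert n m)
          else if h : n/2 + 1 - 1 < n/2 then .inner j 0 ⟨n/2 + 1 - 1, h⟩ else .lit i b)
          = .lit i b := (dif_neg (by omega)).trans (dif_neg (by omega))
      refine ⟨i, b, w.copy (dif_pos rfl) e2, ?_⟩
      rw [SimpleGraph.Walk.length_copy, hl]
      omega
  | inner j t s =>
    have hs := s.isLt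
    rcases hp : φ j t with ⟨i, b⟩
    have hadj : ∀ r, r < n/2 - (s:ℕ) →
        (Gphi n m φ).Adj
          (if h : (s:ℕ) + r < n/2 then (Vert.inner j t ⟨(s:ℕ) + r, h⟩ : Vert n m) else .lit i b)
          (if h : (s:ℕ) + (r+1) < n/2 then (Vert.inner j t ⟨(s:ℕ) + (r+1), h⟩ : Vert n m)
            else .lit i b) := by
      intro r hr
      rw [dif_pos (show (s:ℕ) + r < n/2 by omega)]
      by_cases h2 : (s:ℕ) + (r+1) < n/2
      · rw [dif_pos h2]
        exact adj_inner_inner (show (s:ℕ) + r + 1 = (s:ℕ) + (r+1) by omega)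
      · rw [dif_neg h2]
        exact adj_inner_lit (show (s:ℕ) + r = n/2 - 1 by omega) hp
    obtain ⟨w, hl, -⟩ := exists_walk_seq0 (Gphi n m φ)
      (fun r => if h : (s:ℕ) + r < n/2 then .inner j t ⟨(s:ℕ) + r, h⟩ else .lit i b)
      (n/2 - (s:ℕ)) hadj
    · have e1 : (if h : (s:ℕ) + 0 < n/2 then (Vert.inner j t ⟨(s:ℕ) + 0, h⟩ : Vert n m)
          else .lit i b) = .inner j t s :=
        dif_pos (by omega)
      have e2 : (if h : (s:ℕ) + (n/2 - (s:ℕ)) < n/2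
          then (Vert.inner j t ⟨(s:ℕ) + (n/2 - (s:ℕ)), h⟩ : Vert n m)
          else .lit i b) = .lit i b := dif_neg (by omega)
      refine ⟨i, b, w.copy e1 e2, ?_⟩
      rw [SimpleGraph.Walk.length_copy, hl]
      omega

lemma exists_walk_le (h4 : 4 ≤ n) (u v : Vert n m) :
    ∃ w : (Gphi n m φ).Walk u v, w.length ≤ 3*n - 1 := by
  obtain ⟨i, b, w1, h1⟩ := walk_to_lit h4 u
  obtain ⟨i', b', w2, h2⟩ := walk_to_lit h4 v
  obtain ⟨w3, h3⟩ := walk_lit_lit h4 i i' b b'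
  refine ⟨w1.append (w3.append w2.reverse), ?_⟩
  rw [SimpleGraph.Walk.length_append, SimpleGraph.Walk.length_append,
    SimpleGraph.Walk.length_reverse]
  omega

end GP


/-- For every 3SAT formula `φ` on `n` boolean variables (`n` even, `n ≥ 4`) and every truth
assignment `A`, the sequence `V₁, …, V_n, L₁, …, L_n, V_{n+1}, …, V_{2n}` — where `L_i = X_i`
if `A` sets `x_i` true and `L_i = X̄_i` otherwise — is a shortest path of length `3n − 1` from
`V₁` to `V_{2n}` in `G(φ)`; in particular (the assignment of walks being injective) `G(φ)` has
at least `2ⁿ` distinct diametral paths. -/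
theorem Gphi_assignment_paths (n m : ℕ) (hn : Even n) (h4 : 4 ≤ n)
    (φ : Fin m → Fin 3 → Fin n × Bool) :
    (Gphi n m φ).dist (Vert.chain ⟨0, by omega⟩) (Vert.chain ⟨2 * n - 1, by omega⟩)
        = (Gphi n m φ).diam ∧
    ∃ f : (Fin n → Bool) →
        (Gphi n m φ).Walk (Vert.chain ⟨0, by omega⟩) (Vert.chain ⟨2 * n - 1, by omega⟩),
      Function.Injective f ∧
      ∀ A : Fin n → Bool,
        (f A).IsPath ∧
        (f A).support = assignSupport n m A ∧
        (f A).length = 3 * n - 1 ∧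
        (f A).length
          = (Gphi n m φ).dist (Vert.chain ⟨0, by omega⟩) (Vert.chain ⟨2 * n - 1, by omega⟩) := by
  have H : ∀ A : Fin n → Bool, ∃ w : (Gphi n m φ).Walk (Vert.chain ⟨0, by omega⟩)
      (Vert.chain ⟨2 * n - 1, by omega⟩), w.support = assignSupport n m A := by
    intro A
    obtain ⟨w, hl, hs⟩ := GP.exists_walk_seq0 (Gphi n m φ) (GP.gA n m h4 A) (3*n-1)
      (fun k hk => GP.gA_adj k hk)
    have e1 : GP.gA n m h4 A 0 = (Vert.chain ⟨0, by omega⟩ : Vert n m) :=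
      GP.gA_lo (by omega)
    have e2 : GP.gA n m h4 A (3*n-1) = (Vert.chain ⟨2 * n - 1, by omega⟩ : Vert n m) :=
      (GP.gA_hi (by omega) (by omega)).trans
        (congrArg _ (Fin.ext (show 3*n-1-n = 2*n-1 by omega)))
    refine ⟨w.copy e1 e2, ?_⟩
    rw [SimpleGraph.Walk.support_copy, hs, show 3*n-1+1 = 3*n by omega, GP.range_map_gA]
  choose f hf using H
  have hsuplen : ∀ A : Fin n → Bool, (assignSupport n m A).length = 3*n := by
    intro A
    rw [← GP.range_map_gA (h4 := h4)]
    simp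
  have hlenf : ∀ A, (f A).length = 3*n - 1 := by
    intro A
    have h1 := congrArg List.length (hf A)
    rw [SimpleGraph.Walk.length_support, hsuplen A] at h1
    omega
  have hnodup : ∀ A : Fin n → Bool, (assignSupport n m A).Nodup := by
    intro A
    rw [← GP.range_map_gA (h4 := h4)]
    refine List.Nodup.map_on ?_ List.nodup_range
    intro x hx y hy hxy
    have hx' : x < 3*n := List.mem_range.mp hx
    have hy' : y < 3*n := List.mem_range.mp hy
    have h2 := congrArg (GP.rho n m φ) hxy
    rw [GP.rho_gA hx', GP.rho_gA hy'] at h2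
    exact_mod_cast h2
  set A0 : Fin n → Bool := fun _ => true with hA0
  have e1 : GP.gA n m h4 A0 0 = (Vert.chain ⟨0, by omega⟩ : Vert n m) := GP.gA_lo (by omega)
  have e2 : GP.gA n m h4 A0 (3*n-1) = (Vert.chain ⟨2 * n - 1, by omega⟩ : Vert n m) :=
    (GP.gA_hi (by omega) (by omega)).trans
      (congrArg _ (Fin.ext (show 3*n-1-n = 2*n-1 by omega)))
  have hrv0 : GP.rho n m φ (Vert.chain ⟨0, by omega⟩ : Vert n m) = ((0:ℕ):ℤ) := by
    rw [← e1]; exact GP.rho_gA (by omega)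
  have hrv1 : GP.rho n m φ (Vert.chain ⟨2 * n - 1, by omega⟩ : Vert n m) = ((3*n-1:ℕ):ℤ) := by
    rw [← e2]; exact GP.rho_gA (by omega)
  have hreach : (Gphi n m φ).Reachable (Vert.chain ⟨0, by omega⟩ : Vert n m)
      (Vert.chain ⟨2 * n - 1, by omega⟩) := ⟨f A0⟩
  obtain ⟨wmin, hwmin⟩ := hreach.exists_walk_length_eq_dist
  have hrho := GP.rho_walk hn h4 wmin
  have hdist : (Gphi n m φ).dist (Vert.chain ⟨0, by omega⟩ : Vert n m)
      (Vert.chain ⟨2 * n - 1, by omega⟩) = 3*n - 1 := by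
    have hle : (Gphi n m φ).dist (Vert.chain ⟨0, by omega⟩ : Vert n m)
        (Vert.chain ⟨2 * n - 1, by omega⟩) ≤ 3*n-1 := by
      have := SimpleGraph.dist_le (f A0)
      rw [hlenf A0] at this
      exact this
    have hge := hrho.2
    rw [hrv0, hrv1, hwmin] at hge
    omega
  have hediam : (Gphi n m φ).ediam ≤ ((3*n-1 : ℕ) : ℕ∞) := by
    apply SimpleGraph.ediam_le_of_edist_le
    intro u v
    obtain ⟨w, hw⟩ := GP.exists_walk_le (φ := φ) h4 u v
    exact le_trans (SimpleGraph.edist_le w) (by exact_mod_cast hw)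
  have hnetop : (Gphi n m φ).ediam ≠ ⊤ := by
    intro h
    rw [h] at hediam
    exact ENat.coe_ne_top (3*n-1) (top_le_iff.mp hediam)
  have hdiam_le : (Gphi n m φ).diam ≤ 3*n-1 := by
    have h2 := ENat.toNat_le_toNat hediam (ENat.coe_ne_top _)
    rwa [ENat.toNat_coe] at h2
  have hdiam_ge := SimpleGraph.dist_le_diam (G := Gphi n m φ)
    (u := (Vert.chain ⟨0, by omega⟩ : Vert n m)) (v := Vert.chain ⟨2 * n - 1, by omega⟩) hnetop
  have hinj : Function.Injective f := by
    intro A A' hAA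
    have hs : assignSupport n m A = assignSupport n m A' := by
      rw [← hf A, ← hf A', hAA]
    rw [assignSupport, assignSupport] at hs
    have h2 := List.append_cancel_right hs
    have h3 := List.append_cancel_left h2
    funext i
    have h5 := List.map_inj_left.mp h3 i (List.mem_finRange i)
    simpa using h5
  refine ⟨by omega, f, hinj, fun A => ⟨?_, hf A, hlenf A, by rw [hlenf A, hdist]⟩⟩
  rw [SimpleGraph.Walk.isPath_def, hf A]
  exact hnodup A
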